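/- Let a < 0, b real, and p = 0 in the singular-type surface X(u,v) = (f(u)+v, g(u)+u+r(u)v²/2, g(u)-u+r(u)v²/2) with r(u) = √(-a/2), f(u) = -(2b/a)u, g(u) = -(b²/a²)u. Then EG - F² = -4(b/a - √(-a/2)·v)², so the surface is timelike where v ≠ v₀ := (b/a)√(2/(-a)), and the curve u ↦ X(u, v₀) is a straight line with lightlike direction (0, 1 - b²/a², -1 - b²/a²) (up to scaling). -/

import Mathlib

/-- Lorentzian inner product on `ℝ × ℝ × ℝ` for the metric `dx² + dy² - dt²`. -/
def Lprod (p q : ℝ × ℝ × ℝ) : ℝ := p.1 * q.1 + p.2.1 * q.2.1 - p.2.2 * q.2.2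

/-- For `a < 0`, `p = 0`, the singular-type surface with `r(u) = √(-a/2)`,
`f(u) = -(2b/a)u`, `g(u) = -(b²/a²)u` has `EG - F² = -4(b/a - √(-a/2)·v)²`; it is timelike
where `v ≠ v₀ := (b/a)√(2/(-a))`, and `u ↦ X(u, v₀)` is a straight line with lightlike
direction `(-2b/a, 1 - b²/a², -1 - b²/a²)`. -/
theorem stmt13 (a b : ℝ) (ha : a < 0)
    (X : ℝ → ℝ → ℝ × ℝ × ℝ)
    (hX : ∀ u v, X u v = (-(2 * b / a) * u + v,
        -(b ^ 2 / a ^ 2) * u + u + Real.sqrt (-a / 2) * v ^ 2 / 2,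
        -(b ^ 2 / a ^ 2) * u - u + Real.sqrt (-a / 2) * v ^ 2 / 2)) :
    (∀ u v : ℝ,
      let Xu := deriv (fun u' => X u' v) u
      let Xv := deriv (fun v' => X u v') v
      Lprod Xu Xu * Lprod Xv Xv - (Lprod Xu Xv) ^ 2 =
        -4 * (b / a - Real.sqrt (-a / 2) * v) ^ 2 ∧
      (v ≠ (b / a) * Real.sqrt (2 / (-a)) →
        Lprod Xu Xu * Lprod Xv Xv - (Lprod Xu Xv) ^ 2 < 0)) ∧
    (∀ u : ℝ, X u ((b / a) * Real.sqrt (2 / (-a))) =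
      X 0 ((b / a) * Real.sqrt (2 / (-a))) +
        u • ((-(2 * b / a), 1 - b ^ 2 / a ^ 2, -1 - b ^ 2 / a ^ 2) : ℝ × ℝ × ℝ)) ∧
    Lprod (-(2 * b / a), 1 - b ^ 2 / a ^ 2, -1 - b ^ 2 / a ^ 2)
      (-(2 * b / a), 1 - b ^ 2 / a ^ 2, -1 - b ^ 2 / a ^ 2) = 0 ∧
    ((-(2 * b / a), 1 - b ^ 2 / a ^ 2, -1 - b ^ 2 / a ^ 2) : ℝ × ℝ × ℝ) ≠ 0 := by
  have ha0 : a ≠ 0 := ne_of_lt ha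
  have ha' : (0:ℝ) < -a / 2 := by linarith
  set s := Real.sqrt (-a / 2) with hs
  have hspos : 0 < s := Real.sqrt_pos.mpr ha'
  have hsinv : Real.sqrt (2 / (-a)) = s⁻¹ := by
    rw [show (2 / (-a) : ℝ) = (-a / 2)⁻¹ by field_simp, Real.sqrt_inv, hs]
  -- derivatives
  have hXu : ∀ u v : ℝ, deriv (fun u' => X u' v) u
      = (-(2 * b / a), 1 - b ^ 2 / a ^ 2, -(b ^ 2 / a ^ 2) - 1) := by
    intro u v
    have heq : (fun u' => X u' v) = fun u' =>
        ((-(2 * b / a) * u' + v, -(b ^ 2 / a ^ 2) * u' + u' + s * v ^ 2 / 2,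
          -(b ^ 2 / a ^ 2) * u' - u' + s * v ^ 2 / 2) : ℝ × ℝ × ℝ) := by
      funext u'; rw [hX]
    rw [heq]
    have h1 : HasDerivAt (fun u' : ℝ => -(2 * b / a) * u' + v) (-(2 * b / a)) u := by
      simpa using ((hasDerivAt_id u).const_mul (-(2 * b / a))).add_const v
    have h2 : HasDerivAt (fun u' : ℝ => -(b ^ 2 / a ^ 2) * u' + u' + s * v ^ 2 / 2)
        (1 - b ^ 2 / a ^ 2) u := by
      have := (((hasDerivAt_id u).const_mul (-(b ^ 2 / a ^ 2))).add (hasDerivAt_id u)).add_const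
        (s * v ^ 2 / 2)
      refine this.congr_deriv ?_; simp; ring
    have h3 : HasDerivAt (fun u' : ℝ => -(b ^ 2 / a ^ 2) * u' - u' + s * v ^ 2 / 2)
        (-(b ^ 2 / a ^ 2) - 1) u := by
      have := (((hasDerivAt_id u).const_mul (-(b ^ 2 / a ^ 2))).sub (hasDerivAt_id u)).add_const
        (s * v ^ 2 / 2)
      refine this.congr_deriv ?_; ring
    exact (h1.prodMk (h2.prodMk h3)).deriv
  have hXv : ∀ u v : ℝ, deriv (fun v' => X u v') v = (1, s * v, s * v) := by
    intro u v
    have heq : (fun v' => X u v') = fun v' =>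
        ((-(2 * b / a) * u + v', -(b ^ 2 / a ^ 2) * u + u + s * v' ^ 2 / 2,
          -(b ^ 2 / a ^ 2) * u - u + s * v' ^ 2 / 2) : ℝ × ℝ × ℝ) := by
      funext v'; rw [hX]
    rw [heq]
    have h1 : HasDerivAt (fun v' : ℝ => -(2 * b / a) * u + v') 1 v := by
      simpa using (hasDerivAt_id v).const_add (-(2 * b / a) * u)
    have hq : HasDerivAt (fun v' : ℝ => s * v' ^ 2 / 2) (s * v) v := by
      have := ((hasDerivAt_pow 2 v).const_mul s).div_const 2
      refine this.congr_deriv ?_; simp; ring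
    have h2 : HasDerivAt (fun v' : ℝ => -(b ^ 2 / a ^ 2) * u + u + s * v' ^ 2 / 2) (s * v) v :=
      hq.const_add (-(b ^ 2 / a ^ 2) * u + u)
    have h3 : HasDerivAt (fun v' : ℝ => -(b ^ 2 / a ^ 2) * u - u + s * v' ^ 2 / 2) (s * v) v :=
      hq.const_add (-(b ^ 2 / a ^ 2) * u - u)
    exact (h1.prodMk (h2.prodMk h3)).deriv
  refine ⟨?_, ?_, ?_, ?_⟩
  · intro u v
    simp only [hXu, hXv, Lprod]
    have key : (-(2 * b / a) * -(2 * b / a) + (1 - b ^ 2 / a ^ 2) * (1 - b ^ 2 / a ^ 2) -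
          (-(b ^ 2 / a ^ 2) - 1) * (-(b ^ 2 / a ^ 2) - 1)) *
        (1 * 1 + s * v * (s * v) - s * v * (s * v)) -
      (-(2 * b / a) * 1 + (1 - b ^ 2 / a ^ 2) * (s * v) - (-(b ^ 2 / a ^ 2) - 1) * (s * v)) ^ 2
        = -4 * (b / a - s * v) ^ 2 := by ring
    rw [key]
    refine ⟨rfl, ?_⟩
    intro hv
    have hne : b / a - s * v ≠ 0 := by
      intro h
      apply hv
      have : v = (b / a) / s := by field_simp at h ⊢; linarith
      rw [this, hsinv, div_eq_mul_inv]
    have hpos : 0 < (b / a - s * v) ^ 2 := by positivity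
    linarith
  · intro u
    rw [hX, hX]
    simp only [Prod.ext_iff, Prod.smul_mk, smul_eq_mul, Prod.mk_add_mk]
    refine ⟨by ring, by ring, by ring⟩
  · simp only [Lprod]; ring
  · intro h
    rw [Prod.ext_iff, Prod.ext_iff] at h
    have h3 : -1 - b ^ 2 / a ^ 2 = 0 := h.2.2
    have : 0 ≤ b ^ 2 / a ^ 2 := by positivity
    linarith
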